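/- Let y₁,…,y_{i−1} ∈ ℝ^d and consider the geometric graph on the i points {0, y₁,…,y_{i−1}} with edges between points at Euclidean distance less than 1. Then the Lebesgue measure (on ℝ^{d(i−1)}) of the set of tuples (y₁,…,y_{i−1}) for which this graph is connected is at most i^{i−2}·θ_d^{i−1}, where θ_d is the volume of the unit ball in ℝ^d. -/

import Mathlib

open scoped Classical
open Metric MeasureTheory

/-- The geometric graph on points `x : Fin m → ℝ^d` with connectivity radius `r`. -/
def geomGraph {d m : ℕ} (r : ℝ) (x : Fin m → EuclideanSpace ℝ (Fin d)) :
    SimpleGraph (Fin m) :=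
  SimpleGraph.fromRel (fun a b => dist (x a) (x b) < r)

open Finset

def AcycG {α β : Type*} (q : α → α ⊕ β) : Prop :=
  ∃ D : α → ℕ, ∀ a a', q a = Sum.inl a' → D a' < D a

lemma acycG_map_iff {α α' β β' : Type*} (eα : α ≃ α') (eβ : β ≃ β') (q : α → α ⊕ β) :
    AcycG (fun a' => (q (eα.symm a')).map eα eβ) ↔ AcycG q := by
  constructor
  · rintro ⟨D, hD⟩
    refine ⟨D ∘ eα, fun a a' h => ?_⟩
    have := hD (eα a) (eα a')
    simp only [Equiv.symm_apply_apply, h, Sum.map_inl] at this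
    exact this trivial
  · rintro ⟨D, hD⟩
    refine ⟨D ∘ eα.symm, fun a a' h => ?_⟩
    rcases h' : q (eα.symm a) with b | b
    · simp only [h', Sum.map_inl, Sum.inl.injEq] at h
      have := hD _ _ h'
      simpa [← h] using this
    · simp [h', Sum.map_inr] at h

/-- Transfer equivalence for forests. -/
noncomputable def acycSubtypeEquiv {α α' β β' : Type*} (eα : α ≃ α') (eβ : β ≃ β') :
    {q : α → α ⊕ β // AcycG q} ≃ {q' : α' → α' ⊕ β' // AcycG q'} :=
  Equiv.subtypeEquiv (Equiv.arrowCongr eα (eα.sumCongr eβ))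
    (fun q => by
      rw [iff_comm]
      convert acycG_map_iff eα eβ q using 2
      funext a'
      simp [Equiv.arrowCongr_apply])

noncomputable def forestCount (p k : ℕ) : ℕ :=
  Nat.card {q : Fin p → Fin p ⊕ Fin k // AcycG q}

/-- Decomposition of a forest according to the set `s` of depth-one vertices. -/
noncomputable def decompEquiv (p k : ℕ) (s : Finset (Fin p)) :
    {q : Fin p → Fin p ⊕ Fin k // AcycG q ∧ ∀ j, (q j).isRight ↔ j ∈ s}
      ≃ ({j // j ∈ s} → Fin k) ×
        {q' : {j // j ∈ sᶜ} → {j // j ∈ sᶜ} ⊕ {j // j ∈ s} // AcycG q'} where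
  toFun := fun ⟨q, hA, hf⟩ =>
    ⟨fun j => (q j.1).getRight ((hf j.1).mpr j.2),
     ⟨fun j =>
        let v := (q j.1).getLeft (by
          rw [← Sum.not_isRight, hf j.1]
          exact Finset.mem_compl.mp j.2)
        if hv : v ∈ s then Sum.inr ⟨v, hv⟩ else Sum.inl ⟨v, Finset.mem_compl.mpr hv⟩,
      by
        obtain ⟨D, hD⟩ := hA
        refine ⟨fun j => D j.1, fun a a' h => ?_⟩
        dsimp only at h
        split_ifs at h with hv
        all_goals cases h
        exact hD a.1 _ (Sum.inl_getLeft _ _).symm⟩⟩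
  invFun := fun ⟨g, q', hA'⟩ =>
    ⟨fun j => if hj : j ∈ s then Sum.inr (g ⟨j, hj⟩)
              else Sum.inl (Sum.elim Subtype.val Subtype.val (q' ⟨j, Finset.mem_compl.mpr hj⟩)),
     by
      constructor
      · obtain ⟨D', hD'⟩ := hA'
        refine ⟨fun j => if hj : j ∈ sᶜ then D' ⟨j, hj⟩ + 1 else 0, fun a a' h => ?_⟩
        dsimp only at h
        split_ifs at h with ha
        all_goals cases h
        have ha' : a ∈ sᶜ := Finset.mem_compl.mpr ha
        rcases hq' : q' ⟨a, ha'⟩ with w | w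
        · have hw := hD' _ _ hq'
          simp only [Sum.elim_inl]
          show (if hj : (w : Fin p) ∈ sᶜ then D' ⟨w, hj⟩ + 1 else 0) < _
          rw [dif_pos w.2, dif_pos ha']
          simp only [Subtype.coe_eta]
          omega
        · simp only [Sum.elim_inr]
          show (if hj : (w : Fin p) ∈ sᶜ then D' ⟨w, hj⟩ + 1 else 0) < _
          rw [dif_neg (by simpa using w.2), dif_pos ha']
          omega
      · intro j
        dsimp only
        split_ifs with hj <;> simp [hj]
     ⟩
  left_inv := fun ⟨q, hA, hf⟩ => by
    ext j : 2
    dsimp only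
    split_ifs with hj hc1 hc2
    · exact Sum.inr_getRight _ _
    · simp only [Sum.elim_inr]
      exact Sum.inl_getLeft _ _
    · simp only [Sum.elim_inl]
      exact Sum.inl_getLeft _ _
  right_inv := fun ⟨g, q', hA'⟩ => by
    refine Prod.ext ?_ ?_
    · funext j
      apply Sum.inr_injective
      rw [Sum.inr_getRight]
      exact dif_pos j.2
    · apply Subtype.ext
      funext j
      have hj : j.1 ∉ s := Finset.mem_compl.mp j.2
      have h2 : ∀ pf, Sum.getLeft
          (if hj' : j.1 ∈ s then Sum.inr (g ⟨j.1, hj'⟩)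
            else Sum.inl (Sum.elim Subtype.val Subtype.val (q' ⟨j.1, Finset.mem_compl.mpr hj'⟩)))
          pf = Sum.elim Subtype.val Subtype.val (q' j) := by
        intro pf
        apply Sum.inl_injective
        rw [Sum.inl_getLeft, dif_neg hj]
      dsimp only
      rcases hq : q' j with w | w
      · have hv : (Sum.elim Subtype.val Subtype.val (q' j) : Fin p) ∉ s := by
          rw [hq]; simpa using Finset.mem_compl.mp w.2
        rw [dif_neg (by rw [h2]; exact hv)]
        simp only [Sum.inl.injEq]
        apply Subtype.ext
        show Sum.getLeft _ _ = (w : Fin p)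
        rw [h2, hq]
        rfl
      · have hv : (Sum.elim Subtype.val Subtype.val (q' j) : Fin p) ∈ s := by
          rw [hq]; exact w.2
        rw [dif_pos (by rw [h2]; exact hv)]
        simp only [Sum.inr.injEq]
        apply Subtype.ext
        show Sum.getLeft _ _ = (w : Fin p)
        rw [h2, hq]
        rfl

lemma forestCount_zero (k : ℕ) : forestCount 0 k = 1 := by
  have : Unique {q : Fin 0 → Fin 0 ⊕ Fin k // AcycG q} :=
    { default := ⟨finZeroElim, ⟨finZeroElim, fun a => a.elim0⟩⟩
      uniq := fun q => by
        apply Subtype.ext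
        funext j
        exact j.elim0 }
  exact Nat.card_unique

lemma forestCount_pos_zero (p : ℕ) (hp : 0 < p) : forestCount p 0 = 0 := by
  have : IsEmpty {q : Fin p → Fin p ⊕ Fin 0 // AcycG q} := by
    constructor
    rintro ⟨q, D, hD⟩
    obtain ⟨j, -, hj⟩ := Finset.exists_min_image (univ : Finset (Fin p)) D ⟨⟨0, hp⟩, mem_univ _⟩
    rcases hq : q j with v | r
    · exact absurd (hj v (mem_univ _)) (not_le.mpr (hD j v hq))
    · exact r.elim0
  exact Nat.card_of_isEmpty
lemma forestCount_rec (p k : ℕ) :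
    forestCount p k = ∑ j ∈ Finset.range (p + 1), p.choose j * (k ^ j * forestCount (p - j) j) := by
  classical
  have e1 : {q : Fin p → Fin p ⊕ Fin k // AcycG q}
      ≃ Σ s : Finset (Fin p), {x : {q : Fin p → Fin p ⊕ Fin k // AcycG q} //
          Finset.univ.filter (fun j => (x.1 j).isRight) = s} :=
    (Equiv.sigmaFiberEquiv _).symm
  have e2 : ∀ s : Finset (Fin p),
      {x : {q : Fin p → Fin p ⊕ Fin k // AcycG q} //
          Finset.univ.filter (fun j => (x.1 j).isRight) = s}
        ≃ {q : Fin p → Fin p ⊕ Fin k // AcycG q ∧ ∀ j, (q j).isRight ↔ j ∈ s} := by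
    intro s
    refine ((Equiv.subtypeSubtypeEquivSubtypeInter
        (fun q : Fin p → Fin p ⊕ Fin k => AcycG q)
        (fun q => Finset.univ.filter (fun j => (q j).isRight) = s)).trans
      (Equiv.subtypeEquivRight ?_))
    intro q
    rw [and_congr_right_iff]
    intro _
    rw [Finset.ext_iff]
    simp
  have hcard : ∀ s : Finset (Fin p),
      Nat.card {q : Fin p → Fin p ⊕ Fin k // AcycG q ∧ ∀ j, (q j).isRight ↔ j ∈ s}
        = k ^ s.card * forestCount (p - s.card) s.card := by
    intro s
    rw [Nat.card_congr (decompEquiv p k s), Nat.card_prod]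
    congr 1
    · rw [Nat.card_fun]
      simp [Nat.card_eq_fintype_card]
    · rw [forestCount]
      refine Nat.card_congr (acycSubtypeEquiv ?_ ?_)
      · exact (sᶜ.equivFin).trans (finCongr (by simp [Finset.card_compl]))
      · exact s.equivFin
  calc forestCount p k
      = ∑ s : Finset (Fin p),
          Nat.card {q : Fin p → Fin p ⊕ Fin k // AcycG q ∧ ∀ j, (q j).isRight ↔ j ∈ s} := by
        rw [forestCount, Nat.card_congr e1, Nat.card_eq_fintype_card, Fintype.card_sigma]
        refine Finset.sum_congr rfl fun s _ => ?_
        rw [← Nat.card_eq_fintype_card, Nat.card_congr (e2 s)]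
    _ = ∑ s ∈ (Finset.univ : Finset (Fin p)).powerset,
          k ^ s.card * forestCount (p - s.card) s.card := by
        rw [Finset.powerset_univ]
        exact Finset.sum_congr rfl fun s _ => hcard s
    _ = ∑ j ∈ Finset.range (p + 1), p.choose j * (k ^ j * forestCount (p - j) j) := by
        rw [Finset.sum_powerset]
        simp only [Finset.card_univ, Fintype.card_fin]
        refine Finset.sum_congr rfl fun j hj => ?_
        rw [Finset.sum_congr rfl (fun t ht => ?_), Finset.sum_const,
          Finset.card_powersetCard, Finset.card_univ, Fintype.card_fin, smul_eq_mul]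
        have := (Finset.mem_powersetCard.mp ht).2
        rw [this]
lemma key_identity (p k : ℕ) (hp : 1 ≤ p) :
    ∑ j ∈ Finset.range (p + 1), p.choose j * (k ^ j * (j * p ^ (p - j)))
      = p * (k * (p + k) ^ (p - 1)) := by
  rw [Finset.sum_range_succ']
  simp only [Nat.choose_zero_right, pow_zero, zero_mul, mul_zero, add_zero, one_mul]
  have h1 : ∀ i, p.choose (i + 1) * (i + 1) = p * (p - 1).choose i := by
    intro i
    obtain ⟨p', rfl⟩ : ∃ p', p = p' + 1 := ⟨p - 1, by omega⟩
    simpa [Nat.succ_eq_add_one] using (Nat.add_one_mul_choose_eq p' i).symm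
  have step : ∀ i ∈ Finset.range p, p.choose (i + 1) * (k ^ (i + 1) * ((i + 1) * p ^ (p - (i + 1))))
      = (p * k) * ((p - 1).choose i * (k ^ i * p ^ (p - 1 - i))) := by
    intro i hi
    have h2 : p - (i + 1) = p - 1 - i := by omega
    rw [h2, show p.choose (i + 1) * (k ^ (i + 1) * ((i + 1) * p ^ (p - 1 - i)))
        = (p.choose (i + 1) * (i + 1)) * (k ^ (i + 1) * p ^ (p - 1 - i)) from by ring, h1 i]
    ring
  rw [Finset.sum_congr rfl step, ← Finset.mul_sum]
  have hpow : (k + p) ^ (p - 1) = ∑ i ∈ Finset.range p, k ^ i * p ^ (p - 1 - i) * (p - 1).choose i := by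
    have := add_pow k p (p - 1)
    rw [this, show p - 1 + 1 = p by omega]
    simp [Nat.cast_id]
  have : ∑ i ∈ Finset.range p, (p - 1).choose i * (k ^ i * p ^ (p - 1 - i))
      = (k + p) ^ (p - 1) := by
    rw [hpow]
    exact Finset.sum_congr rfl fun i _ => by ring
  rw [this, add_comm k p]
  ring

lemma forestCount_eq (p : ℕ) : ∀ k, 1 ≤ k →
    forestCount p k = if p = 0 then 1 else k * (p + k) ^ (p - 1) := by
  induction p using Nat.strong_induction_on with
  | _ p IH =>
    intro k hk
    rcases Nat.eq_zero_or_pos p with rfl | hp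
    · simp [forestCount_zero]
    · rw [if_neg hp.ne']
      apply Nat.eq_of_mul_eq_mul_left hp
      rw [forestCount_rec p k, Finset.mul_sum]
      rw [← key_identity p k hp]
      refine Finset.sum_congr rfl fun j hj => ?_
      rw [Finset.mem_range] at hj
      rcases Nat.eq_zero_or_pos j with rfl | hj1
      · simp [forestCount_pos_zero p hp]
      · have hFa : p * forestCount (p - j) j = j * p ^ (p - j) := by
          rcases eq_or_lt_of_le (Nat.le_of_lt_succ hj) with rfl | hjp
          · rw [Nat.sub_self, forestCount_zero]
            simp
          · have hlt : p - j < p := by omega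
            rw [IH (p - j) hlt j hj1, if_neg (by omega)]
            rw [show p - j + j = p by omega]
            have : p ^ (p - j) = p ^ (p - j - 1) * p := by
              rw [← pow_succ]
              congr 1
              omega
            rw [this]
            ring
        calc p * (p.choose j * (k ^ j * forestCount (p - j) j))
            = p.choose j * (k ^ j * (p * forestCount (p - j) j)) := by ring
          _ = p.choose j * (k ^ j * (j * p ^ (p - j))) := by rw [hFa]
/-- Acyclicity for a parent function on vertices `{0, 1, …, n}`, where vertex `j+1`
has parent `q j`. -/
def Acyc {n : ℕ} (q : Fin n → Fin (n + 1)) : Prop :=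
  ∃ D : Fin (n + 1) → ℕ, ∀ j, D (q j) < D j.succ

def vertEquiv (n : ℕ) : Fin n ⊕ Fin 1 ≃ Fin (n + 1) where
  toFun := Sum.elim Fin.succ (fun _ => 0)
  invFun := fun v => Fin.cases (Sum.inr 0) Sum.inl v
  left_inv := by
    rintro (j | r)
    · simp
    · simp [Subsingleton.elim r 0]
  right_inv := by
    intro v
    cases v using Fin.cases <;> simp

lemma acyc_iff {n : ℕ} (q : Fin n → Fin (n + 1)) :
    Acyc q ↔ AcycG (fun j => (vertEquiv n).symm (q j)) := by
  have key : ∀ (j : Fin n) (j' : Fin n), (vertEquiv n).symm (q j) = Sum.inl j' ↔ q j = j'.succ := by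
    intro j j'
    constructor
    · intro h
      have := congrArg (vertEquiv n) h
      rwa [Equiv.apply_symm_apply] at this
    · intro h
      rw [h]
      have : (vertEquiv n) (Sum.inl j') = j'.succ := rfl
      rw [← this, Equiv.symm_apply_apply]
  constructor
  · rintro ⟨D, hD⟩
    refine ⟨fun j => D j.succ, fun j j' h => ?_⟩
    rw [key] at h
    have := hD j
    rw [h] at this
    exact this
  · rintro ⟨D', hD'⟩
    refine ⟨fun v => Fin.cases 0 (fun i => D' i + 1) v, fun j => ?_⟩
    simp only [Fin.cases_succ]
    rcases h : (vertEquiv n).symm (q j) with j' | r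
    · rw [key] at h
      rw [h]
      simp only [Fin.cases_succ]
      have := hD' j j' (by rw [key]; exact h)
      omega
    · have : q j = 0 := by
        have := congrArg (vertEquiv n) h
        rwa [Equiv.apply_symm_apply] at this
      rw [this]
      simp

lemma card_acyc (n : ℕ) :
    Nat.card {q : Fin n → Fin (n + 1) // Acyc q} = (n + 1) ^ (n - 1) := by
  have e : {q : Fin n → Fin (n + 1) // Acyc q} ≃ {q' : Fin n → Fin n ⊕ Fin 1 // AcycG q'} := by
    refine Equiv.subtypeEquiv (Equiv.arrowCongr (Equiv.refl _) (vertEquiv n).symm) ?_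
    intro q
    rw [acyc_iff]
    constructor <;> intro h <;> convert h using 2 <;> simp [Equiv.arrowCongr_apply]
  rw [Nat.card_congr e]
  have : Nat.card {q' : Fin n → Fin n ⊕ Fin 1 // AcycG q'} = forestCount n 1 := rfl
  rw [this, forestCount_eq n 1 le_rfl]
  rcases n with - | m
  · simp
  · simp

section MeasurePart

variable {d : ℕ}

/-- The configuration `0, y 0, …, y (n-1)` as a tuple of `n+1` points. -/
def pts {d n : ℕ} (y : Fin n → EuclideanSpace ℝ (Fin d)) :
    Fin (n + 1) → EuclideanSpace ℝ (Fin d) :=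
  Fin.cons 0 y

/-- The constraint set associated to a parent function `q`. -/
def consSet (d n : ℕ) (q : Fin n → Fin (n + 1)) : Set (Fin n → EuclideanSpace ℝ (Fin d)) :=
  {y | ∀ j, dist (pts y j.succ) (pts y (q j)) < 1}

lemma continuous_ptsApp (n : ℕ) (v : Fin (n + 1)) :
    Continuous (fun y : Fin n → EuclideanSpace ℝ (Fin d) => pts y v) := by
  cases v using Fin.cases with
  | zero => simpa [pts] using continuous_const
  | succ w => simpa [pts] using continuous_apply w

lemma isOpen_consSet (d n : ℕ) (q : Fin n → Fin (n + 1)) : IsOpen (consSet d n q) := by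
  have : consSet d n q = ⋂ j, {y : Fin n → EuclideanSpace ℝ (Fin d) |
      dist (pts y j.succ) (pts y (q j)) < 1} := by
    ext y; simp [consSet, Set.mem_iInter]
  rw [this]
  refine isOpen_iInter_of_finite fun j => ?_
  exact isOpen_lt ((continuous_ptsApp n j.succ).dist (continuous_ptsApp n (q j))) continuous_const

lemma pts_eq_of_le (n : ℕ) (y : Fin (n + 1) → EuclideanSpace ℝ (Fin d)) (v : Fin (n + 2))
    (w : Fin (n + 1)) (hvw : (v : ℕ) = (w : ℕ)) :
    pts y v = pts (fun j : Fin n => y j.castSucc) w := by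
  rcases Nat.eq_zero_or_pos (v : ℕ) with h0 | h1
  · have hv0 : v = 0 := Fin.ext (by simpa using h0)
    have hw0 : w = 0 := Fin.ext (by rw [Fin.val_zero]; omega)
    rw [hv0, hw0]
    simp [pts]
  · have hv : v ≠ 0 := by
      intro h; rw [h] at h1; simp at h1
    have hw : w ≠ 0 := by
      intro h; rw [h] at hvw; simp at hvw; omega
    obtain ⟨u, rfl⟩ : ∃ u : Fin (n + 1), u.succ = v := by
      refine ⟨⟨(v : ℕ) - 1, by omega⟩, ?_⟩
      apply Fin.ext; simp; omega
    obtain ⟨u', rfl⟩ : ∃ u' : Fin n, u'.succ = w := by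
      refine ⟨⟨(w : ℕ) - 1, by omega⟩, ?_⟩
      apply Fin.ext; simp; omega
    simp only [pts, Fin.cons_succ]
    have : u = u'.castSucc := Fin.ext (by simp at hvw ⊢; omega)
    rw [this]

end MeasurePart
lemma volume_consSet_le_of_inc (d : ℕ) :
    ∀ n (q : Fin n → Fin (n + 1)), (∀ j, (q j : ℕ) ≤ (j : ℕ)) →
      volume (consSet d n q) ≤ (volume (ball (0 : EuclideanSpace ℝ (Fin d)) 1)) ^ n := by
  intro n
  induction n with
  | zero =>
    intro q hq
    calc volume (consSet d 0 q)
        ≤ volume (Set.univ : Set (Fin 0 → EuclideanSpace ℝ (Fin d))) :=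
          measure_mono (Set.subset_univ _)
      _ = 1 := by
          rw [volume_pi, MeasureTheory.Measure.pi_univ]
          simp
      _ = _ := by simp
  | succ n IH =>
    intro q hq
    set E := EuclideanSpace ℝ (Fin d) with hE
    set θ := volume (ball (0 : E) 1) with hθ
    have hql : (q (Fin.last n) : ℕ) ≤ n := by simpa using hq (Fin.last n)
    set q' : Fin n → Fin (n + 1) :=
      fun j => ⟨(q j.castSucc : ℕ), by have := hq j.castSucc; simp at this; omega⟩ with hq'def
    have hq' : ∀ j, (q' j : ℕ) ≤ (j : ℕ) := fun j => by
      have := hq j.castSucc; simpa [hq'def] using this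
    set qlast : Fin (n + 1) := ⟨(q (Fin.last n) : ℕ), by omega⟩ with hqlast
    set B : Set (E × (Fin n → E)) :=
      {p | p.2 ∈ consSet d n q' ∧ dist p.1 (pts p.2 qlast) < 1} with hBdef
    have hBopen : IsOpen B := by
      have h1 : IsOpen {p : E × (Fin n → E) | p.2 ∈ consSet d n q'} :=
        (isOpen_consSet d n q').preimage continuous_snd
      have h2 : IsOpen {p : E × (Fin n → E) | dist p.1 (pts p.2 qlast) < 1} := by
        refine isOpen_lt (Continuous.dist continuous_fst ?_) continuous_const
        exact (continuous_ptsApp n qlast).comp continuous_snd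
      exact h1.inter h2
    set e := MeasurableEquiv.piFinSuccAbove (fun _ : Fin (n + 1) => E) (Fin.last n) with hedef
    have hset : consSet d (n + 1) q = e ⁻¹' B := by
      ext y
      have hey : e y = (y (Fin.last n), fun j : Fin n => y j.castSucc) := by
        rw [hedef]
        simp only [MeasurableEquiv.piFinSuccAbove, MeasurableEquiv.coe_mk,
          Fin.insertNthEquiv, Equiv.coe_fn_symm_mk, Fin.removeNth]
        congr 1
        funext j
        simp [Fin.succAbove_last, Fin.init]
      constructor
      · intro hy
        rw [Set.mem_preimage, hey]
        constructor
        · intro j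
          have := hy j.castSucc
          rwa [pts_eq_of_le n y j.castSucc.succ j.succ (by simp),
            pts_eq_of_le n y (q j.castSucc) (q' j) (by simp [hq'def])] at this
        · have := hy (Fin.last n)
          rw [pts_eq_of_le n y (q (Fin.last n)) qlast (by simp [hqlast])] at this
          have hlast : pts y (Fin.last n).succ = y (Fin.last n) := by
            simp only [pts, Fin.cons_succ]
          rwa [hlast] at this
      · rintro ⟨h1, h2⟩
        rw [hey] at h1 h2
        intro j
        rcases Fin.eq_castSucc_or_eq_last j with ⟨j₀, rfl⟩ | rfl
        · have := h1 j₀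
          rwa [pts_eq_of_le n y j₀.castSucc.succ j₀.succ (by simp),
            pts_eq_of_le n y (q j₀.castSucc) (q' j₀) (by simp [hq'def])]
        · have hlast : pts y (Fin.last n).succ = y (Fin.last n) := by
            simp only [pts, Fin.cons_succ]
          rwa [hlast, pts_eq_of_le n y (q (Fin.last n)) qlast (by simp [hqlast])]
    have hmp : MeasurePreserving e (volume : Measure (Fin (n + 1) → E))
        ((volume : Measure E).prod (volume : Measure (Fin n → E))) := by
      have := measurePreserving_piFinSuccAbove (fun _ : Fin (n + 1) => (volume : Measure E))
        (Fin.last n)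
      rwa [← volume_pi, ← volume_pi] at this
    calc volume (consSet d (n + 1) q) = (volume.prod volume) B := by
          rw [hset]
          exact hmp.measure_preimage hBopen.measurableSet.nullMeasurableSet
      _ = ∫⁻ z, volume ((fun x => (x, z)) ⁻¹' B) ∂volume :=
          MeasureTheory.Measure.prod_apply_symm hBopen.measurableSet
      _ ≤ ∫⁻ z, (consSet d n q').indicator (fun _ => θ) z ∂volume := by
          refine lintegral_mono fun z => ?_
          by_cases hz : z ∈ consSet d n q'
          · rw [Set.indicator_of_mem hz]
            have hsub : (fun x => (x, z)) ⁻¹' B ⊆ ball (pts z qlast) 1 := by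
              intro x hx
              exact mem_ball.mpr hx.2
            calc volume ((fun x => (x, z)) ⁻¹' B) ≤ volume (ball (pts z qlast) 1) :=
                  measure_mono hsub
              _ = θ := by rw [hθ, Measure.addHaar_ball_center]
          · have : (fun x => (x, z)) ⁻¹' B = ∅ := by
              ext x
              simp only [Set.mem_preimage, Set.mem_empty_iff_false, iff_false]
              intro hx
              exact hz hx.1
            rw [this]
            simp
      _ = θ * volume (consSet d n q') :=
          lintegral_indicator_const (isOpen_consSet d n q').measurableSet θ
      _ ≤ θ * θ ^ n := by
          exact mul_le_mul_right (IH q' hq') θ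
      _ = θ ^ (n + 1) := by rw [pow_succ, mul_comm]
lemma volume_consSet_le_of_acyc (d n : ℕ) (q : Fin n → Fin (n + 1)) (hA : Acyc q) :
    volume (consSet d n q) ≤ (volume (ball (0 : EuclideanSpace ℝ (Fin d)) 1)) ^ n := by
  classical
  obtain ⟨D, hD⟩ := hA
  set D' : Fin (n + 1) → ℕ := fun v => if v = 0 then 0 else D v + 1 with hD'def
  have hD' : ∀ j, D' (q j) < D' j.succ := by
    intro j
    have h1 : D' j.succ = D j.succ + 1 := if_neg (Fin.succ_ne_zero j)
    by_cases h : q j = 0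
    · rw [h1, hD'def]
      simp [h]
    · rw [h1, hD'def]
      simp only [if_neg h]
      exact Nat.succ_lt_succ (hD j)
  set K : Fin (n + 1) → ℕ := fun v => (v : ℕ) + D' v * (n + 1) with hKdef
  have hKinj : Function.Injective K := by
    intro v w h
    have hv : (v : ℕ) < n + 1 := v.isLt
    have hw : (w : ℕ) < n + 1 := w.isLt
    have h2 : (v : ℕ) = (w : ℕ) := by
      have := congrArg (· % (n + 1)) h
      simpa [hKdef, Nat.add_mul_mod_self_right, Nat.mod_eq_of_lt hv, Nat.mod_eq_of_lt hw]
        using this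
    exact Fin.ext h2
  have hKlt : ∀ v w, D' v < D' w → K v < K w := by
    intro v w h
    have hv : (v : ℕ) < n + 1 := v.isLt
    calc K v = (v : ℕ) + D' v * (n + 1) := rfl
      _ < (D' v + 1) * (n + 1) := by
          rw [add_mul, one_mul]
          omega
      _ ≤ D' w * (n + 1) := Nat.mul_le_mul_right _ (Nat.succ_le_of_lt h)
      _ ≤ K w := Nat.le_add_left _ _
  have hK0 : K 0 = 0 := by simp [hKdef, hD'def]
  have hKpos : ∀ v : Fin (n + 1), v ≠ 0 → 0 < K v := by
    intro v hv
    have : (v : ℕ) ≠ 0 := fun h => hv (Fin.ext h)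
    have : 0 < (v : ℕ) := Nat.pos_of_ne_zero this
    exact Nat.lt_of_lt_of_le this (Nat.le_add_right _ _)
  set σ := Tuple.sort K with hσdef
  have hsm : StrictMono (K ∘ σ) :=
    (Tuple.monotone_sort K).strictMono_of_injective (hKinj.comp σ.injective)
  set ρ := σ.symm with hρdef
  have hρlt : ∀ v w, K v < K w → ρ v < ρ w := by
    intro v w h
    have := hsm.lt_iff_lt (a := ρ v) (b := ρ w)
    simp only [Function.comp_apply, hρdef, Equiv.apply_symm_apply] at this
    exact this.mp h
  have hσ0 : σ 0 = 0 := by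
    have h1 : K (σ 0) ≤ K (σ (ρ 0)) := Tuple.monotone_sort K (Fin.zero_le _)
    rw [hρdef, Equiv.apply_symm_apply, hK0] at h1
    by_contra hne
    exact absurd h1 (not_le.mpr (hKpos _ hne))
  have hρ0 : ρ 0 = 0 := by
    rw [hρdef, Equiv.symm_apply_eq, hσ0]
  have hρne : ∀ j : Fin n, ρ j.succ ≠ 0 := by
    intro j h
    rw [← hρ0] at h
    exact Fin.succ_ne_zero j (ρ.injective h)
  set τfun : Fin n → Fin n := fun j => (ρ j.succ).pred (hρne j) with hτfun
  have hτinj : Function.Injective τfun := by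
    intro a b h
    have : ρ a.succ = ρ b.succ := by
      have := congrArg Fin.succ h
      rwa [hτfun, Fin.succ_pred, Fin.succ_pred] at this
    exact Fin.succ_injective _ (ρ.injective this)
  set τ : Equiv.Perm (Fin n) := Equiv.ofBijective τfun
    ((Finite.injective_iff_bijective).mp hτinj) with hτdef
  have hτ : ∀ j, (τ j).succ = ρ j.succ := fun j => Fin.succ_pred _ (hρne j)
  have hτs : ∀ j, ρ ((τ.symm j).succ) = j.succ := by
    intro j
    rw [← hτ (τ.symm j), Equiv.apply_symm_apply]
  have hστ : ∀ w : Fin n, σ w.succ = (τ.symm w).succ := by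
    intro w
    conv_lhs => rw [← hτs w]
    rw [hρdef, Equiv.apply_symm_apply]
  set qN : Fin n → Fin (n + 1) := fun j => ρ (q (τ.symm j)) with hqN
  have hInc : ∀ j, (qN j : ℕ) ≤ (j : ℕ) := by
    intro j
    have h1 : ρ (q (τ.symm j)) < ρ ((τ.symm j).succ) := hρlt _ _ (hKlt _ _ (hD' (τ.symm j)))
    rw [hτs j] at h1
    have h2 := (Fin.lt_iff_val_lt_val).mp h1
    simp only [Fin.val_succ] at h2
    simp only [hqN]
    omega
  set T := MeasurableEquiv.piCongrLeft (fun _ : Fin n => EuclideanSpace ℝ (Fin d)) τ with hT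
  have hTapp : ∀ (y : Fin n → EuclideanSpace ℝ (Fin d)) (b : Fin n), T y b = y (τ.symm b) := by
    intro y b
    rw [hT, MeasurableEquiv.coe_piCongrLeft]
    conv_lhs => rw [show b = τ (τ.symm b) by rw [Equiv.apply_symm_apply]]
    rw [Equiv.piCongrLeft_apply_apply]
  have hpts : ∀ (y : Fin n → EuclideanSpace ℝ (Fin d)) (v : Fin (n + 1)),
      pts (T y) v = pts y (σ v) := by
    intro y v
    cases v using Fin.cases with
    | zero =>
      rw [hσ0]
      simp [pts]
    | succ w =>
      rw [hστ w]
      simp only [pts, Fin.cons_succ]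
      exact hTapp y w
  have key : ∀ (y : Fin n → EuclideanSpace ℝ (Fin d)) (j : Fin n),
      (dist (pts (T y) j.succ) (pts (T y) (qN j)) < 1)
        ↔ (dist (pts y (τ.symm j).succ) (pts y (q (τ.symm j))) < 1) := by
    intro y j
    rw [hpts, hpts, hστ j]
    have h2 : σ (qN j) = q (τ.symm j) := Equiv.apply_symm_apply σ _
    rw [h2]
  have hsetEq : consSet d n q = T ⁻¹' consSet d n qN := by
    ext y
    simp only [Set.mem_preimage, consSet, Set.mem_setOf_eq]
    constructor
    · intro hy j
      exact (key y j).mpr (hy (τ.symm j))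
    · intro hy j
      have := (key y (τ j)).mp (hy (τ j))
      rwa [Equiv.symm_apply_apply] at this
  have hmp : MeasurePreserving T (volume : Measure (Fin n → EuclideanSpace ℝ (Fin d)))
      (volume : Measure (Fin n → EuclideanSpace ℝ (Fin d))) := by
    rw [hT]
    exact volume_measurePreserving_piCongrLeft _ τ
  calc volume (consSet d n q) = volume (T ⁻¹' consSet d n qN) := by rw [hsetEq]
    _ = volume (consSet d n qN) :=
        hmp.measure_preimage (isOpen_consSet d n qN).measurableSet.nullMeasurableSet
    _ ≤ _ := volume_consSet_le_of_inc d n qN hInc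
lemma connected_subset_iUnion (d n : ℕ) :
    {y : Fin n → EuclideanSpace ℝ (Fin d) |
        (geomGraph 1 (Fin.cons (0 : EuclideanSpace ℝ (Fin d)) y)).Connected}
      ⊆ ⋃ q : {q : Fin n → Fin (n + 1) // Acyc q}, consSet d n q.1 := by
  intro y hy
  set G := geomGraph 1 (Fin.cons (0 : EuclideanSpace ℝ (Fin d)) y) with hG
  have hconn : G.Connected := hy
  have H : ∀ j : Fin n, ∃ u : Fin (n + 1),
      G.Adj j.succ u ∧ G.dist u 0 < G.dist j.succ 0 := by
    intro j
    obtain ⟨p, hp⟩ := (hconn.preconnected j.succ 0).exists_walk_length_eq_dist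
    obtain ⟨u, hadj, p', hps⟩ := SimpleGraph.Walk.exists_eq_cons_of_ne (Fin.succ_ne_zero j) p
    refine ⟨u, hadj, ?_⟩
    have h1 : G.dist u 0 ≤ p'.length := SimpleGraph.dist_le p'
    have h2 : p.length = p'.length + 1 := by rw [hps]; simp
    omega
  choose q hq1 hq2 using H
  refine Set.mem_iUnion.mpr ⟨⟨q, ⟨fun v => G.dist v 0, hq2⟩⟩, ?_⟩
  intro j
  have := hq1 j
  rw [hG, geomGraph, SimpleGraph.fromRel_adj] at this
  rcases this.2 with h | h
  · simpa [pts] using h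
  · rw [dist_comm] at h
    simpa [pts] using h

theorem volume_connected_tuples_le' (d n : ℕ) :
    volume {y : Fin n → EuclideanSpace ℝ (Fin d) |
        (geomGraph 1 (Fin.cons (0 : EuclideanSpace ℝ (Fin d)) y)).Connected}
      ≤ ENNReal.ofReal (((n + 1 : ℕ) : ℝ) ^ (n - 1) *
          (volume (Metric.ball (0 : EuclideanSpace ℝ (Fin d)) 1)).toReal ^ n) := by
  classical
  set θ := volume (Metric.ball (0 : EuclideanSpace ℝ (Fin d)) 1) with hθ
  have hθtop : θ ≠ ⊤ := (measure_ball_lt_top).ne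
  haveI : Fintype {q : Fin n → Fin (n + 1) // Acyc q} := Fintype.ofFinite _
  have hbound : volume {y : Fin n → EuclideanSpace ℝ (Fin d) |
      (geomGraph 1 (Fin.cons (0 : EuclideanSpace ℝ (Fin d)) y)).Connected}
        ≤ ((n + 1) ^ (n - 1) : ℕ) * θ ^ n := by
    calc volume {y : Fin n → EuclideanSpace ℝ (Fin d) |
          (geomGraph 1 (Fin.cons (0 : EuclideanSpace ℝ (Fin d)) y)).Connected}
        ≤ volume (⋃ q : {q : Fin n → Fin (n + 1) // Acyc q}, consSet d n q.1) :=
          measure_mono (connected_subset_iUnion d n)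
      _ ≤ ∑' q : {q : Fin n → Fin (n + 1) // Acyc q}, volume (consSet d n q.1) :=
          measure_iUnion_le _
      _ = ∑ q : {q : Fin n → Fin (n + 1) // Acyc q}, volume (consSet d n q.1) :=
          tsum_fintype _
      _ ≤ ∑ _q : {q : Fin n → Fin (n + 1) // Acyc q}, θ ^ n :=
          Finset.sum_le_sum fun q _ => volume_consSet_le_of_acyc d n q.1 q.2
      _ = (Fintype.card {q : Fin n → Fin (n + 1) // Acyc q}) * θ ^ n := by
          rw [Finset.sum_const, Finset.card_univ, nsmul_eq_mul]
      _ = ((n + 1) ^ (n - 1) : ℕ) * θ ^ n := by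
          rw [← Nat.card_eq_fintype_card, card_acyc n]
  refine hbound.trans ?_
  have hRHS : ENNReal.ofReal (((n + 1 : ℕ) : ℝ) ^ (n - 1) * θ.toReal ^ n)
      = ((n + 1) ^ (n - 1) : ℕ) * θ ^ n := by
    rw [ENNReal.ofReal_mul (by positivity)]
    congr 1
    · rw [← Nat.cast_pow, ENNReal.ofReal_natCast, Nat.cast_pow]
    · rw [ENNReal.ofReal_pow ENNReal.toReal_nonneg, ENNReal.ofReal_toReal hθtop]
  rw [hRHS]

/-- The Lebesgue measure of the set of tuples `(y₁,…,y_{i−1})` for which the geometric graph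
on `{0, y₁,…,y_{i−1}}` (here `i = n + 1` points) with radius `1` is connected is at most
`i^{i−2}·θ_d^{i−1}`. -/
theorem volume_connected_tuples_le (d n : ℕ) (hd : 1 ≤ d) :
    volume {y : Fin n → EuclideanSpace ℝ (Fin d) |
        (geomGraph 1 (Fin.cons (0 : EuclideanSpace ℝ (Fin d)) y)).Connected}
      ≤ ENNReal.ofReal (((n + 1 : ℕ) : ℝ) ^ (n - 1) *
          (volume (Metric.ball (0 : EuclideanSpace ℝ (Fin d)) 1)).toReal ^ n) :=
  volume_connected_tuples_le' d n
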